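/- For all real y ≥ 0, Σ_{n=1}^∞ 2^{5n/2} Γ(n/2) y^n / n! = 16y² · ₂F₂(1, 1; 3/2, 2; 8y²) + π · Erfi(2√2 · y). -/

import Mathlib

open MeasureTheory
open scoped ENNReal NNReal

/-- Pochhammer symbol `(a)_k = a (a+1) ⋯ (a+k−1)` for real `a`. -/
noncomputable def poch (a : ℝ) (k : ℕ) : ℝ := ∏ i ∈ Finset.range k, (a + i)

/-- The generalized hypergeometric function `₂F₂(a₁,a₂;b₁,b₂;z)`. -/
noncomputable def F22 (a₁ a₂ b₁ b₂ z : ℝ) : ℝ :=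
  ∑' k : ℕ, poch a₁ k * poch a₂ k * z^k / (poch b₁ k * poch b₂ k * k.factorial)

/-- The imaginary error function `Erfi x = (2/√π) ∫₀^x e^{t²} dt`. -/
noncomputable def erfi (x : ℝ) : ℝ :=
  (2 / Real.sqrt Real.pi) * ∫ t in (0:ℝ)..x, Real.exp (t^2)

lemma gamma_half (k : ℕ) :
    Real.Gamma ((k:ℝ) + 1/2) =
      Real.sqrt Real.pi * (2*k).factorial / (4^k * k.factorial) := by
  induction k with
  | zero =>
    have := Real.Gamma_one_half_eq
    norm_num at this ⊢
    simpa using this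
  | succ n ih =>
    have h : ((n:ℝ)+1) + 1/2 = ((n:ℝ) + 1/2) + 1 := by ring
    have hne : ((n:ℝ) + 1/2) ≠ 0 := by positivity
    have hf1 : ((2*(n+1)).factorial : ℝ) = (2*(n:ℝ)+2)*(2*(n:ℝ)+1)*(2*n).factorial := by
      have : 2*(n+1) = (2*n+1)+1 := by ring
      rw [this, Nat.factorial_succ, Nat.factorial_succ]
      push_cast; ring
    have hf2 : ((n+1).factorial : ℝ) = ((n:ℝ)+1) * n.factorial := by
      rw [Nat.factorial_succ]; push_cast; ring
    push_cast
    rw [h, Real.Gamma_add_one hne, ih, hf1, hf2]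
    have h4 : (0:ℝ) < 4^n := by positivity
    have hnf : (0:ℝ) < n.factorial := by positivity
    field_simp
    ring

lemma poch_one (k : ℕ) : poch 1 k = k.factorial := by
  induction k with
  | zero => simp [poch]
  | succ n ih =>
    rw [poch, Finset.prod_range_succ, ← poch, ih, Nat.factorial_succ]
    push_cast; ring

lemma poch_two (k : ℕ) : poch 2 k = (k+1).factorial := by
  induction k with
  | zero => simp [poch]
  | succ n ih =>
    rw [poch, Finset.prod_range_succ, ← poch, ih, Nat.factorial_succ (n+1)]
    push_cast; ring

lemma poch_threehalf (k : ℕ) :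
    poch (3/2) k = (2*k+1).factorial / (4^k * k.factorial) := by
  induction k with
  | zero => simp [poch]
  | succ n ih =>
    rw [poch, Finset.prod_range_succ, ← poch, ih]
    have h1 : ((2*(n+1)+1).factorial : ℝ) = (2*(n:ℝ)+3)*(2*(n:ℝ)+2)*(2*n+1).factorial := by
      have : 2*(n+1)+1 = (2*n+2)+1 := by ring
      rw [this, Nat.factorial_succ, Nat.factorial_succ]
      push_cast; ring
    have h2 : ((n+1).factorial : ℝ) = ((n:ℝ)+1) * n.factorial := by
      rw [Nat.factorial_succ]; push_cast; ring
    rw [h1, h2]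
    have h4 : (0:ℝ) < 4^n := by positivity
    have hnf : (0:ℝ) < n.factorial := by positivity
    field_simp
    ring

lemma exp_sq_eq (t : ℝ) : Real.exp (t^2) = ∑' k : ℕ, t^(2*k) / k.factorial := by
  rw [Real.exp_eq_exp_ℝ, NormedSpace.exp_eq_tsum_div]
  exact tsum_congr fun k => by rw [pow_mul]

lemma integral_exp_sq (x : ℝ) (hx : 0 ≤ x) :
    ∫ t in (0:ℝ)..x, Real.exp (t^2) =
      ∑' k : ℕ, x^(2*k+1) / ((2*(k:ℝ)+1) * k.factorial) := by
  rw [intervalIntegral.integral_of_le hx]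
  have h1 : ∀ t : ℝ, Real.exp (t^2) = ∑' k : ℕ, t^(2*k) / k.factorial := exp_sq_eq
  simp_rw [h1]
  have hmeas : ∀ k : ℕ, AEStronglyMeasurable (fun t : ℝ => t^(2*k) / (k.factorial:ℝ))
      (volume.restrict (Set.Ioc 0 x)) :=
    fun k => Continuous.aestronglyMeasurable (by continuity)
  have hfin : ∑' k : ℕ, ∫⁻ t in Set.Ioc (0:ℝ) x, ‖t^(2*k) / (k.factorial:ℝ)‖₊ ∂volume ≠ ⊤ := by
    have hb : ∀ k : ℕ, ∫⁻ t in Set.Ioc (0:ℝ) x, ‖t^(2*k) / (k.factorial:ℝ)‖₊ ∂volume ≤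
        ENNReal.ofReal (x^(2*k) / k.factorial) * ENNReal.ofReal x := by
      intro k
      have hpt : ∀ t ∈ Set.Ioc (0:ℝ) x, (‖t^(2*k) / (k.factorial:ℝ)‖₊ : ℝ≥0∞) ≤
          ENNReal.ofReal (x^(2*k) / k.factorial) := by
        intro t ht
        rw [← enorm_eq_nnnorm, Real.enorm_eq_ofReal_abs]
        gcongr
        rw [abs_div, abs_pow, abs_of_pos ht.1, Nat.abs_cast]
        gcongr
        · exact ht.1.le
        · exact ht.2
      calc ∫⁻ t in Set.Ioc (0:ℝ) x, ‖t^(2*k) / (k.factorial:ℝ)‖₊ ∂volume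
          ≤ ∫⁻ _ in Set.Ioc (0:ℝ) x, ENNReal.ofReal (x^(2*k) / k.factorial) ∂volume :=
            setLIntegral_mono (by measurability) hpt
        _ = ENNReal.ofReal (x^(2*k) / k.factorial) * ENNReal.ofReal x := by
            rw [setLIntegral_const, Real.volume_Ioc, sub_zero]
    refine ne_top_of_le_ne_top ?_ (ENNReal.tsum_le_tsum hb)
    rw [ENNReal.tsum_mul_right]
    refine ENNReal.mul_ne_top ?_ ENNReal.ofReal_ne_top
    rw [← ENNReal.ofReal_tsum_of_nonneg (fun k => by positivity) ?_]
    · exact ENNReal.ofReal_ne_top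
    · simp_rw [pow_mul]
      exact Real.summable_pow_div_factorial (x^2)
  rw [MeasureTheory.integral_tsum hmeas hfin]
  refine tsum_congr fun k => ?_
  rw [← intervalIntegral.integral_of_le hx, intervalIntegral.integral_div,
    integral_pow]
  push_cast
  rw [zero_pow (by omega)]
  field_simp
  simp

lemma h52 : (2:ℝ)^((5:ℝ)/2) = 4*Real.sqrt 2 := by
  rw [show (5:ℝ)/2 = ((5:ℕ):ℝ)*((1:ℝ)/2) by norm_num, Real.rpow_mul (by norm_num),
    Real.rpow_natCast, ← Real.sqrt_eq_rpow]
  rw [show ((2:ℝ)^5) = 4^2*2 by norm_num, Real.sqrt_mul (by positivity), Real.sqrt_sq (by norm_num)]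

lemma even_term (y : ℝ) (k : ℕ) :
    32^(k+1)*(k.factorial:ℝ)*y^(2*k+2)/((2*k+2).factorial) =
      16*y^2*(poch 1 k*poch 1 k*(8*y^2)^k/(poch (3/2) k*poch 2 k*k.factorial)) := by
  rw [poch_one, poch_two, poch_threehalf]
  have e3 : ((2*k+2).factorial:ℝ) = (2*(k:ℝ)+2)*((2*k+1).factorial) := by
    rw [show 2*k+2 = (2*k+1)+1 from rfl, Nat.factorial_succ]; push_cast; ring
  have e4 : ((k+1).factorial:ℝ) = ((k:ℝ)+1)*k.factorial := by
    rw [Nat.factorial_succ]; push_cast; ring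
  rw [e3, e4]
  have p1 : (8*y^2:ℝ)^k = 8^k*y^(2*k) := by rw [mul_pow, ← pow_mul]
  have p2 : (y:ℝ)^(2*k+2) = y^(2*k)*y^2 := by rw [pow_add]
  have p3 : (32:ℝ)^(k+1) = 32*(8^k*4^k) := by
    rw [pow_succ, show (32:ℝ)=8*4 by norm_num, mul_pow]; ring
  rw [p1, p2, p3]
  have h1 : (0:ℝ) < k.factorial := by positivity
  have h2 : (0:ℝ) < (2*k+1).factorial := by positivity
  have h4 : (0:ℝ) < 4^k := by positivity
  field_simp
  ring

theorem gamma_half_sum (y : ℝ) (hy : 0 ≤ y) :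
    ∑' n : ℕ, (2:ℝ) ^ ((5 * ((n:ℝ) + 1)) / 2) * Real.Gamma (((n:ℝ) + 1) / 2) *
        y^(n+1) / ((n+1).factorial : ℝ) =
      16 * y^2 * F22 1 1 (3/2) 2 (8 * y^2) + Real.pi * erfi (2 * Real.sqrt 2 * y) := by
  set f : ℕ → ℝ := fun n => (2:ℝ) ^ ((5 * ((n:ℝ) + 1)) / 2) * Real.Gamma (((n:ℝ) + 1) / 2) *
      y^(n+1) / ((n+1).factorial : ℝ) with hfdef
  have sqrtpi_pos : (0:ℝ) < Real.sqrt Real.pi := Real.sqrt_pos.2 Real.pi_pos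
  -- closed form of the even-index terms
  have hfe : ∀ k : ℕ, f (2*k) =
      ((2:ℝ)^((5:ℝ)/2) * Real.sqrt Real.pi) *
        (8^k * y^(2*k+1) / ((2*(k:ℝ)+1) * k.factorial)) := by
    intro k
    simp only [hfdef]
    have e1 : (5*(((2*k:ℕ):ℝ)+1))/2 = ((5*k:ℕ):ℝ) + (5:ℝ)/2 := by push_cast; ring
    have e2 : (((2*k:ℕ):ℝ)+1)/2 = (k:ℝ) + 1/2 := by push_cast; ring
    have e3 : ((2*k+1).factorial:ℝ) = (2*(k:ℝ)+1)*((2*k).factorial) := by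
      rw [Nat.factorial_succ]; push_cast; ring
    rw [e1, Real.rpow_add two_pos, Real.rpow_natCast, e2, gamma_half, e3]
    have p1 : (2:ℝ)^(5*k) = 8^k*4^k := by
      rw [pow_mul, show ((2:ℝ)^5) = 8*4 by norm_num, mul_pow]
    rw [p1]
    have h1 : (0:ℝ) < k.factorial := by positivity
    have h2 : (0:ℝ) < (2*k).factorial := by positivity
    have h4 : (0:ℝ) < 4^k := by positivity
    have h5 : (0:ℝ) < 2*(k:ℝ)+1 := by positivity
    field_simp
  -- closed form of the odd-index terms
  have hfo' : ∀ k : ℕ, f (2*k+1) =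
      32^(k+1)*(k.factorial:ℝ)*y^(2*k+2)/((2*k+2).factorial) := by
    intro k
    simp only [hfdef]
    have e1 : (5*(((2*k+1:ℕ):ℝ)+1))/2 = ((5*(k+1):ℕ):ℝ) := by push_cast; ring
    have e2 : (((2*k+1:ℕ):ℝ)+1)/2 = ((k:ℝ)) + 1 := by push_cast; ring
    rw [e1, Real.rpow_natCast, e2, Real.Gamma_nat_eq_factorial]
    have p1 : (2:ℝ)^(5*(k+1)) = 32^(k+1) := by rw [pow_mul]; norm_num
    rw [p1, show 2*k+1+1 = 2*k+2 from rfl]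
  have hfo : ∀ k : ℕ, f (2*k+1) =
      16*y^2*(poch 1 k*poch 1 k*(8*y^2)^k/(poch (3/2) k*poch 2 k*k.factorial)) :=
    fun k => (hfo' k).trans (even_term y k)
  -- summability of the even-index terms
  have hso : Summable fun k => f (2*k) := by
    refine (summable_congr hfe).2 (Summable.mul_left _ ?_)
    refine Summable.of_nonneg_of_le (fun k => by positivity) (fun k => ?_)
      ((Real.summable_pow_div_factorial (8*y^2)).mul_left y)
    have h1 : (0:ℝ) < k.factorial := by positivity
    have h2 : (k.factorial:ℝ) ≤ (2*(k:ℝ)+1)*k.factorial := by nlinarith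
    calc 8^k * y^(2*k+1) / ((2*(k:ℝ)+1) * k.factorial)
        ≤ 8^k * y^(2*k+1) / k.factorial :=
          div_le_div_of_nonneg_left (by positivity) h1 h2
      _ = y * ((8*y^2)^k / k.factorial) := by
          rw [mul_pow, ← pow_mul, pow_succ]; ring
  -- summability of the odd-index terms
  have hse : Summable fun k => f (2*k+1) := by
    refine (summable_congr hfo').2 ?_
    refine Summable.of_nonneg_of_le (fun k => by positivity) (fun k => ?_)
      ((Real.summable_pow_div_factorial (32*y^2)).mul_left (32*y^2))
    have hkk : ((k.factorial * k.factorial : ℕ) : ℝ) ≤ ((2*k+2).factorial : ℝ) := by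
      have hdvd : k.factorial * k.factorial ∣ (2*k).factorial := by
        simpa [two_mul] using Nat.factorial_mul_factorial_dvd_factorial_add k k
      have h1 : (2*k).factorial ≤ (2*k+2).factorial := Nat.factorial_le (by omega)
      exact_mod_cast (Nat.le_of_dvd (Nat.factorial_pos _) hdvd).trans h1
    have h1 : (0:ℝ) < (k.factorial:ℝ) * k.factorial := by positivity
    calc 32^(k+1)*(k.factorial:ℝ)*y^(2*k+2)/((2*k+2).factorial)
        ≤ 32^(k+1)*(k.factorial:ℝ)*y^(2*k+2)/((k.factorial:ℝ)*k.factorial) := by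
          apply div_le_div_of_nonneg_left (by positivity) h1
          push_cast at hkk ⊢
          exact hkk
      _ = 32*y^2 * ((32*y^2)^k / k.factorial) := by
          have h0 : (k.factorial:ℝ) ≠ 0 := by positivity
          rw [mul_pow, ← pow_mul, pow_succ]
          field_simp
          ring
  -- the odd-index sum gives the hypergeometric part
  have hodd : ∑' k, f (2*k+1) = 16*y^2 * F22 1 1 (3/2) 2 (8*y^2) := by
    rw [F22, ← tsum_mul_left]
    exact tsum_congr hfo
  -- the even-index sum gives the erfi part
  have heven : ∑' k, f (2*k) = Real.pi * erfi (2*Real.sqrt 2*y) := by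
    rw [erfi, integral_exp_sq _ (by positivity), ← tsum_mul_left, ← tsum_mul_left]
    refine tsum_congr fun k => ?_
    rw [hfe k]
    have hp : (2*Real.sqrt 2*y)^(2*k+1) = 8^k*y^(2*k+1)*(2*Real.sqrt 2) := by
      rw [mul_pow (2*Real.sqrt 2) y]
      have h8 : ((2*Real.sqrt 2)^2 : ℝ) = 8 := by
        rw [mul_pow, Real.sq_sqrt (by norm_num : (0:ℝ) ≤ 2)]; norm_num
      rw [pow_succ, pow_mul, h8]; ring
    have hpi : Real.sqrt Real.pi * Real.sqrt Real.pi = Real.pi :=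
      Real.mul_self_sqrt Real.pi_pos.le
    rw [hp, h52, ← hpi]
    have h5 : (0:ℝ) < 2*(k:ℝ)+1 := by positivity
    have h1 : (0:ℝ) < (k.factorial:ℝ) := by positivity
    field_simp
    simp only [Real.sqrt_sq sqrtpi_pos.le, Real.sq_sqrt Real.pi_pos.le]
    ring
  rw [← tsum_even_add_odd hso hse, hodd, heven, add_comm]
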